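/- Let V be a vector space of dimension d ≥ 3 with nondegenerate symmetric bilinear form g, and h a symmetric bilinear form on V with associated g-self-adjoint operator H (g(Hx,y) = h(x,y)). Define T = h ⊗ 1_V ∈ L(V,V;L(V;V)) by T(u,v)w = h(u,v)w. Then the trace of the metric Jacobi projection applied to T satisfies: trace ∘ (orthogonal projection of T onto metric-g Jacobi operators) = (1/3)[(d−2)h + c(h)g], where c(h) = trace(H). In particular, for T_h = (3/(d−2))[h ⊗ 1_V − (c(h)/(2(d−1))) g ⊗ 1_V], the trace of its Jacobi projection equals h. -/

import Mathlib

open LinearMap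

lemma trace_smulRight' {V : Type*} [AddCommGroup V] [Module ℝ V] [FiniteDimensional ℝ V]
    (f : V →ₗ[ℝ] ℝ) (v : V) : LinearMap.trace ℝ V (f.smulRight v) = f v := by
  have h1 : f.smulRight v = (LinearMap.toSpanSingleton ℝ V v).comp f := by
    ext w; simp [LinearMap.toSpanSingleton, LinearMap.smulRight_apply]
  rw [h1, LinearMap.trace_comp_comm']
  have h2 : f.comp (LinearMap.toSpanSingleton ℝ V v) = (f v) • LinearMap.id := by
    ext; simp [LinearMap.toSpanSingleton, mul_comm]
  rw [h2, map_smul, trace_id, Module.finrank_self]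
  simp

lemma trace_jacobi_aux {V : Type*} [AddCommGroup V] [Module ℝ V] [FiniteDimensional ℝ V]
    (g b : V →ₗ[ℝ] V →ₗ[ℝ] ℝ)
    (hgsym : ∀ u v : V, g u v = g v u)
    (hgnd : ∀ u : V, (∀ v : V, g u v = 0) → u = 0)
    (hbsym : ∀ u v : V, b u v = b v u)
    (B : V →ₗ[ℝ] V) (hB : ∀ x y : V, g (B x) y = b x y)
    (J : V → V → (V →ₗ[ℝ] V))
    (hJ : ∀ u v w x : V, g (J u v w) x =
      ((1 : ℝ) / 6) * (b u v * g w x + b v u * g w x - b u w * g v x - b v w * g u x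
        + b w x * g u v + b w x * g v u - b v x * g u w - b u x * g v w))
    (u v : V) :
    LinearMap.trace ℝ V (J u v)
      = ((1 : ℝ) / 3) * (((Module.finrank ℝ V : ℝ) - 2) * b u v
          + (LinearMap.trace ℝ V B) * g u v) := by
  set M : V →ₗ[ℝ] V :=
    ((1 : ℝ)/6) • ((2 * b u v) • LinearMap.id - (b u).smulRight v - (b v).smulRight u
      + (2 * g u v) • B - (g u).smulRight (B v) - (g v).smulRight (B u)) with hM
  have hJM : J u v = M := by
    ext w
    have key : ∀ x : V, g (J u v w - M w) x = 0 := by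
      intro x
      have : g (M w) x = g (J u v w) x := by
        rw [hJ]
        simp only [hM, LinearMap.smul_apply, LinearMap.sub_apply, LinearMap.add_apply,
          LinearMap.id_apply, LinearMap.smulRight_apply, map_smul, map_sub, map_add,
          smul_eq_mul, LinearMap.smul_apply, hB]
        rw [hbsym v u, hgsym v u]
        ring
      have hsub : g (J u v w - M w) x = g (J u v w) x - g (M w) x := by
        rw [map_sub]; simp
      rw [hsub, this]; ring
    have := hgnd _ key
    exact sub_eq_zero.mp this
  rw [hJM, hM]
  rw [map_smul]
  simp only [map_sub, map_add, map_smul, trace_id, trace_smulRight', smul_eq_mul]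
  have tBv : g u (B v) = b u v := by rw [hgsym, hB, hbsym]
  have tBu : g v (B u) = b u v := by rw [hgsym, hB]
  rw [tBv, tBu, hbsym v u]
  ring


/-- Let `V` have dimension `d ≥ 3`, `g` a nondegenerate symmetric bilinear form, `h` a
symmetric bilinear form with `g`-self-adjoint operator `H` (`g(Hx,y) = h(x,y)`), and let
`T = h ⊗ 1_V`.  If `Jop` is the metric Jacobi projection of `T` (characterized by the
explicit eight-term formula), then `trace(Jop(u,v)) = (1/3)[(d−2)h(u,v) + c(h)·g(u,v)]`
with `c(h) = trace H`.  In particular, if `Jop'` is the metric Jacobi projection of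
`T_h = (3/(d−2))[h ⊗ 1_V − (c(h)/(2(d−1)))·g ⊗ 1_V]`, then `trace(Jop'(u,v)) = h(u,v)`. -/
theorem trace_jacobi_projection_of_h_tensor_id
    {V : Type*} [AddCommGroup V] [Module ℝ V] [FiniteDimensional ℝ V]
    (hd : 3 ≤ Module.finrank ℝ V)
    (g h : V →ₗ[ℝ] V →ₗ[ℝ] ℝ)
    (hgsym : ∀ u v : V, g u v = g v u)
    (hgnd : ∀ u : V, (∀ v : V, g u v = 0) → u = 0)
    (hhsym : ∀ u v : V, h u v = h v u)
    (H : V →ₗ[ℝ] V) (hH : ∀ x y : V, g (H x) y = h x y)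
    (Jop Jop' : V → V → (V →ₗ[ℝ] V))
    (hJop : ∀ u v w x : V, g (Jop u v w) x =
      ((1 : ℝ) / 6) * (h u v * g w x + h v u * g w x - h u w * g v x - h v w * g u x
        + h w x * g u v + h w x * g v u - h v x * g u w - h u x * g v w))
    (hJop' : ∀ u v w x : V,
      (let d : ℝ := (Module.finrank ℝ V : ℝ)
       let h' : V → V → ℝ := fun a b =>
         (3 / (d - 2)) * (h a b - (LinearMap.trace ℝ V H / (2 * (d - 1))) * g a b)
       g (Jop' u v w) x =
        ((1 : ℝ) / 6) * (h' u v * g w x + h' v u * g w x - h' u w * g v x - h' v w * g u x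
          + h' w x * g u v + h' w x * g v u - h' v x * g u w - h' u x * g v w))) :
    (∀ u v : V, LinearMap.trace ℝ V (Jop u v)
      = ((1 : ℝ) / 3) * (((Module.finrank ℝ V : ℝ) - 2) * h u v
          + (LinearMap.trace ℝ V H) * g u v)) ∧
    (∀ u v : V, LinearMap.trace ℝ V (Jop' u v) = h u v) := by
  set d : ℝ := (Module.finrank ℝ V : ℝ) with hdd
  have hd3 : (3 : ℝ) ≤ d := by rw [hdd]; exact_mod_cast hd
  have hd2 : d - 2 ≠ 0 := by linarith
  have hd1 : (2 : ℝ) * (d - 1) ≠ 0 := by intro hc; nlinarith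
  set c : ℝ := LinearMap.trace ℝ V H with hcc
  set k : ℝ := c / (2 * (d - 1)) with hkk
  set b2 : V →ₗ[ℝ] V →ₗ[ℝ] ℝ := (3 / (d - 2)) • (h - k • g) with hb2
  have hb2app : ∀ a b : V, b2 a b = (3 / (d - 2)) * (h a b - k * g a b) := by
    intro a b; simp [hb2, mul_comm]
  set B2 : V →ₗ[ℝ] V := (3 / (d - 2)) • (H - k • LinearMap.id) with hB2
  have hb2sym : ∀ u v : V, b2 u v = b2 v u := by
    intro u v; rw [hb2app, hb2app, hhsym u v, hgsym u v]
  have hB2g : ∀ x y : V, g (B2 x) y = b2 x y := by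
    intro x y
    rw [hB2, hb2app]
    simp only [LinearMap.smul_apply, LinearMap.sub_apply, LinearMap.id_apply, map_smul,
      map_sub, smul_eq_mul, LinearMap.smul_apply, hH]
  have hJ2 : ∀ u v w x : V, g (Jop' u v w) x =
      ((1 : ℝ) / 6) * (b2 u v * g w x + b2 v u * g w x - b2 u w * g v x - b2 v w * g u x
        + b2 w x * g u v + b2 w x * g v u - b2 v x * g u w - b2 u x * g v w) := by
    intro u v w x
    have := hJop' u v w x
    simp only [hb2app]
    exact this
  have trB2 : LinearMap.trace ℝ V B2 = (3 / (d - 2)) * (c - k * d) := by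
    rw [hB2, map_smul, map_sub, map_smul, LinearMap.trace_id, smul_eq_mul, smul_eq_mul, ← hdd,
      ← hcc]
  constructor
  · intro u v
    exact trace_jacobi_aux g h hgsym hgnd hhsym H hH Jop hJop u v
  · intro u v
    rw [trace_jacobi_aux g b2 hgsym hgnd hb2sym B2 hB2g Jop' hJ2 u v, trB2, hb2app, hkk]
    rw [← hdd]
    have hd1' : d - 1 ≠ 0 := by linarith
    field_simp
    ring
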